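/- For every integer n ≥ 2: Σ_{m=1}^{n−1} 1/H_m ≤ 3n/log n. -/

import Mathlib

open MeasureTheory ProbabilityTheory Finset Filter
open scoped ENNReal NNReal

noncomputable section

/-- The `k`-th harmonic number `H_k = ∑_{i=1}^k 1/i`, with `H_0 = 0`. -/
def harm (k : ℕ) : ℝ := ∑ i ∈ Finset.range k, (1 : ℝ) / (i + 1)

instance (n : ℕ) : MeasurableSpace (Equiv.Perm (Fin n)) := ⊤

/-- The uniform distribution on the permutations of `{1,…,n}`. -/
def uniformPerm (n : ℕ) : Measure (Equiv.Perm (Fin n)) :=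
  (PMF.uniformOfFintype (Equiv.Perm (Fin n))).toMeasure

/-- The (1-based) position `N = π⁻¹(l)` of the key `l` in the permutation `π`
(positions are `i+1` for `i : Fin n`, values are `π i + 1`). -/
def bstN (n l : ℕ) (π : Equiv.Perm (Fin n)) : ℕ :=
  1 + ∑ i : Fin n, if (π i : ℕ) + 1 = l then (i : ℕ) else 0

open scoped Classical in
/-- `R₋`: the number of ascending records in the subpermutation of values `< l`
appearing before the position of `l`. -/
def bstRminus (n l : ℕ) (π : Equiv.Perm (Fin n)) : ℕ :=
  (Finset.univ.filter fun r : Fin n =>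
    (r : ℕ) + 1 < bstN n l π ∧ (π r : ℕ) + 1 < l ∧
      ∀ k : Fin n, k < r → (π k : ℕ) + 1 < l → π k < π r).card

open scoped Classical in
/-- `R₊`: the number of descending records in the subpermutation of values `> l`
appearing before the position of `l`. -/
def bstRplus (n l : ℕ) (π : Equiv.Perm (Fin n)) : ℕ :=
  (Finset.univ.filter fun r : Fin n =>
    (r : ℕ) + 1 < bstN n l π ∧ (π r : ℕ) + 1 > l ∧
      ∀ k : Fin n, k < r → (π k : ℕ) + 1 > l → π r < π k).card

/-- `X_{n,l} = R₋ + R₊`: the depth of the node containing `l` in the binary search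
tree built from the permutation `π` of `{1,…,n}`. -/
def bstDepth (n l : ℕ) (π : Equiv.Perm (Fin n)) : ℕ :=
  bstRminus n l π + bstRplus n l π

open scoped Classical in
/-- `G = #{1 ≤ i < N : π(i) < l}`. -/
def bstG (n l : ℕ) (π : Equiv.Perm (Fin n)) : ℕ :=
  (Finset.univ.filter fun i : Fin n =>
    (i : ℕ) + 1 < bstN n l π ∧ (π i : ℕ) + 1 < l).card

/-- The expectation `E X_{n,l}` of the depth of the node containing `l`. -/
def bstExp (n l : ℕ) : ℝ := ∫ π, (bstDepth n l π : ℝ) ∂(uniformPerm n)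

/-- The hypergeometric probability mass function: for `X ~ HypGeo(N; M, n)`,
`P(X = k) = C(M,k)·C(N−M,n−k)/C(N,n)` for `0 ≤ k ≤ n` (and `0` otherwise). -/
def hypPMF (N M n k : ℕ) : ℝ :=
  if k ≤ n then (M.choose k * (N - M).choose (n - k) : ℝ) / (N.choose n) else 0

/-- Total variation distance between (probability) measures on `ℕ`. -/
def dTV (μ ν : Measure ℕ) : ℝ := ⨆ A : Set ℕ, |(μ A).toReal - (ν A).toReal|

/-- The Wasserstein-type distance `d_W` of Barbour–Holst–Janson: the supremum of
`|∫ f dμ − ∫ f dν|` over measurable `f` with `|f(x) − f(y)| ≤ 1` whenever `|x − y| ≤ 1`. -/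
def dW (μ ν : Measure ℝ) : ℝ :=
  sSup { d : ℝ | ∃ f : ℝ → ℝ, Measurable f ∧ (∀ x y, |x - y| ≤ 1 → |f x - f y| ≤ 1) ∧
    d = |∫ x, f x ∂μ - ∫ x, f x ∂ν| }

/-- The mixed Poisson distribution with mixing measure `ν`:
`MixPo(ν)({k}) = ∫ e^{−λ} λ^k / k! ν(dλ)`. -/
def mixPo (ν : Measure ℝ) : Measure ℕ :=
  Measure.sum fun k =>
    (∫⁻ l, ENNReal.ofReal (Real.exp (-l) * l ^ k / k.factorial) ∂ν) • Measure.dirac k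

/-- The standard normal cumulative distribution function `Φ`. -/
def stdNormalCDF (x : ℝ) : ℝ :=
  (1 / Real.sqrt (2 * Real.pi)) * ∫ y in Set.Iic x, Real.exp (-y ^ 2 / 2)

end
section AuxHarm

lemma harm_eq_harmonic (m : ℕ) : harm m = (harmonic m : ℝ) := by
  unfold harm harmonic
  push_cast
  simp [one_div]

lemma log_le_sqrt' {x : ℝ} (hx : 1 ≤ x) : Real.log x ≤ Real.sqrt x := by
  set u := Real.sqrt (Real.sqrt x) with hu
  have hx0 : (0:ℝ) ≤ x := by linarith
  have hsx : (0:ℝ) ≤ Real.sqrt x := Real.sqrt_nonneg x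
  have hu2 : u ^ 2 = Real.sqrt x := Real.sq_sqrt hsx
  have hu4 : u ^ 4 = x := by
    have h : (u ^ 2) ^ 2 = x := by rw [hu2]; exact Real.sq_sqrt hx0
    nlinarith [h]
  have hu0 : 0 < u := by
    have h1 : (1:ℝ) ≤ Real.sqrt x := by
      rw [show (1:ℝ) = Real.sqrt 1 by simp]; exact Real.sqrt_le_sqrt hx
    have h2 : (1:ℝ) ≤ u := by
      rw [hu, show (1:ℝ) = Real.sqrt 1 by simp]; exact Real.sqrt_le_sqrt h1
    linarith
  have hlog : Real.log x = 4 * Real.log u := by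
    rw [← hu4, Real.log_pow]; push_cast; ring
  have h1 : Real.log u ≤ u - 1 := Real.log_le_sub_one_of_pos hu0
  rw [hlog, ← hu2]
  nlinarith [sq_nonneg (u - 2)]

end AuxHarm

theorem sum_inv_harmonic_le (n : ℕ) (hn : 2 ≤ n) :
    ∑ m ∈ Finset.Icc 1 (n - 1), 1 / harm m ≤ 3 * (n : ℝ) / Real.log n := by
  have hn1 : (1:ℝ) < (n:ℝ) := by exact_mod_cast lt_of_lt_of_le one_lt_two hn
  have hL : 0 < Real.log n := Real.log_pos hn1
  set L := Real.log n with hLdef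
  set s := Nat.sqrt n with hs
  have key : ∀ m ∈ Finset.Icc 1 (n-1),
      1 / harm m ≤ 2 / L + (if m ≤ s then (1:ℝ) else 0) := by
    intro m hm
    obtain ⟨hm1, hm2⟩ := Finset.mem_Icc.mp hm
    have hharm1 : (1:ℝ) ≤ harm m := by
      unfold harm
      calc (1:ℝ) = (1:ℝ)/((0:ℕ)+1) := by norm_num
        _ ≤ ∑ i ∈ Finset.range m, (1:ℝ)/(i+1) := by
            apply Finset.single_le_sum (f := fun i : ℕ => (1:ℝ)/((i:ℝ)+1))
            · intro i _; positivity
            · simpa using (show 0 < m by omega)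
    by_cases hms : m ≤ s
    · simp only [hms, if_true]
      have h1 : 1 / harm m ≤ 1 := by
        rw [div_le_one (by linarith)]; exact hharm1
      have h2L : 0 ≤ 2 / L := by positivity
      linarith
    · simp only [hms, if_false]
      push_neg at hms
      have hms' : s + 1 ≤ m := hms
      have hnat : n < (m+1)*(m+1) := by
        calc n < (s+1)*(s+1) := Nat.lt_succ_sqrt n
          _ ≤ (m+1)*(m+1) := by
              apply Nat.mul_le_mul <;> omega
      have hsq : Real.sqrt n ≤ (m:ℝ) + 1 := by
        have h1 : (n:ℝ) ≤ ((m:ℝ)+1)^2 := by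
          have h2 : (n:ℝ) ≤ ((m:ℝ)+1)*((m:ℝ)+1) := by exact_mod_cast hnat.le
          nlinarith [h2]
        calc Real.sqrt n ≤ Real.sqrt (((m:ℝ)+1)^2) := Real.sqrt_le_sqrt h1
          _ = (m:ℝ)+1 := Real.sqrt_sq (by positivity)
      have hlogm : L / 2 ≤ harm m := by
        have h1 : Real.log ((m:ℝ)+1) ≤ harm m := by
          rw [harm_eq_harmonic]
          have := log_add_one_le_harmonic m
          push_cast at this ⊢
          convert this using 2
        have h2 : Real.log (Real.sqrt n) ≤ Real.log ((m:ℝ)+1) := by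
          apply Real.log_le_log (by positivity) hsq
        rw [Real.log_sqrt (by positivity)] at h2
        linarith
      have hhpos : 0 < harm m := by linarith
      have : 1 / harm m ≤ 1 / (L/2) :=
        one_div_le_one_div_of_le (by linarith) hlogm
      rw [one_div_div] at this
      linarith
  calc ∑ m ∈ Finset.Icc 1 (n-1), 1 / harm m
      ≤ ∑ m ∈ Finset.Icc 1 (n-1), (2 / L + (if m ≤ s then (1:ℝ) else 0)) :=
        Finset.sum_le_sum key
    _ = (n-1 : ℕ) * (2/L) + ∑ m ∈ Finset.Icc 1 (n-1), (if m ≤ s then (1:ℝ) else 0) := by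
        rw [Finset.sum_add_distrib, Finset.sum_const, Nat.card_Icc]
        simp [nsmul_eq_mul]
    _ ≤ (n-1 : ℕ) * (2/L) + (s:ℝ) := by
        gcongr
        rw [Finset.sum_boole]
        have hsub : (Finset.Icc 1 (n-1)).filter (fun m => m ≤ s) ⊆ Finset.Icc 1 s := by
          intro m hm
          simp only [Finset.mem_filter, Finset.mem_Icc] at hm ⊢
          exact ⟨hm.1.1, hm.2⟩
        have := Finset.card_le_card hsub
        rw [Nat.card_Icc] at this
        exact_mod_cast this.trans (by omega)
    _ ≤ 3 * (n:ℝ) / L := by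
        have hsle : (s:ℝ) ≤ Real.sqrt n := by
          rw [show ((s:ℕ):ℝ) = Real.sqrt ((s:ℝ)^2) from (Real.sqrt_sq (by positivity)).symm]
          apply Real.sqrt_le_sqrt
          have h2 : ((s:ℝ))^2 ≤ (n:ℝ) := by exact_mod_cast Nat.sqrt_le' n
          nlinarith [h2]
        have hLsqrt : L ≤ Real.sqrt n := log_le_sqrt' (by linarith)
        have hsqn : Real.sqrt n * Real.sqrt n = n := Real.mul_self_sqrt (by positivity)
        have hsqrtle : Real.sqrt n ≤ (n:ℝ) / L := by
          rw [le_div_iff₀ hL]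
          nlinarith [Real.sqrt_nonneg (n:ℝ)]
        have hn1' : ((n-1:ℕ):ℝ) ≤ (n:ℝ) - 1 := by
          rw [Nat.cast_sub (by omega)]; simp
        have h2Lpos : 0 < 2 / L := by positivity
        have hstep : ((n-1:ℕ):ℝ) * (2/L) + (s:ℝ) ≤ ((n:ℝ)-1) * (2/L) + (n:ℝ)/L := by
          gcongr
          exact hsle.trans hsqrtle
        refine hstep.trans ?_
        have e : ((↑n:ℝ)-1)*(2/L) + (↑n:ℝ)/L = (3*(↑n:ℝ)-2)/L := by
          field_simp; ring
        rw [e]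
        gcongr
        linarith
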